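/- Let b, s⁻, s⁺ be m×m real matrices with s⁻ and s⁺ symmetric, s⁺ positive definite, and b·s⁻·bᵀ = −(s⁺)⁻¹. Let β > 0 and δ > 0, and assume −s⁻ ≤ β·1 (i.e. β·1 + s⁻ is positive semidefinite) and s⁺ ≤ (δ²/β)·1 (i.e. (δ²/β)·1 − s⁺ is positive semidefinite). Then for every v ∈ ℝᵐ, ‖bᵀv‖ ≥ (1/δ)·‖v‖. (Quantitative step in the paper's Lemma on the conorms m(bₙ(x)).) -/

import Mathlib

open Matrix RealInnerProductSpace

section helpers
variable {m : ℕ}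

lemma tel_mul (A B : Matrix (Fin m) (Fin m) ℝ) (v : EuclideanSpace ℝ (Fin m)) :
    Matrix.toEuclideanLin (A * B) v = Matrix.toEuclideanLin A (Matrix.toEuclideanLin B v) := by
  simp [Matrix.toEuclideanLin_apply, Matrix.mulVec_mulVec]

lemma tel_one (v : EuclideanSpace ℝ (Fin m)) :
    Matrix.toEuclideanLin (1 : Matrix (Fin m) (Fin m) ℝ) v = v := by
  simp [Matrix.toEuclideanLin_apply]

lemma tel_adj (A : Matrix (Fin m) (Fin m) ℝ) (x y : EuclideanSpace ℝ (Fin m)) :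
    ⟪Matrix.toEuclideanLin A x, y⟫ = ⟪x, Matrix.toEuclideanLin Aᵀ y⟫ := by
  have h : Aᵀ = Aᴴ := (Matrix.conjTranspose_eq_transpose_of_trivial A).symm
  rw [h, Matrix.toEuclideanLin_conjTranspose_eq_adjoint, LinearMap.adjoint_inner_right]

lemma tel_smul_one (c : ℝ) (A : Matrix (Fin m) (Fin m) ℝ) (v w : EuclideanSpace ℝ (Fin m)) :
    ⟪Matrix.toEuclideanLin (c • A) v, w⟫ = c * ⟪Matrix.toEuclideanLin A v, w⟫ := by
  rw [_root_.map_smul]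
  exact real_inner_smul_left _ _ _

end helpers

theorem stmt_8 {m : ℕ} (b sm sp : Matrix (Fin m) (Fin m) ℝ)
    (hsm : sm.IsSymm) (hsp : sp.IsSymm)
    (hposdef : ∀ v : EuclideanSpace ℝ (Fin m), v ≠ 0 → 0 < ⟪Matrix.toEuclideanLin sp v, v⟫)
    (hb : b * sm * bᵀ = -sp⁻¹)
    (β δ : ℝ) (hβ : 0 < β) (hδ : 0 < δ)
    (h1 : ∀ v : EuclideanSpace ℝ (Fin m),
      0 ≤ ⟪Matrix.toEuclideanLin (β • (1 : Matrix (Fin m) (Fin m) ℝ) + sm) v, v⟫)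
    (h2 : ∀ v : EuclideanSpace ℝ (Fin m),
      0 ≤ ⟪Matrix.toEuclideanLin ((δ ^ 2 / β) • (1 : Matrix (Fin m) (Fin m) ℝ) - sp) v, v⟫) :
    ∀ v : EuclideanSpace ℝ (Fin m), (1 / δ) * ‖v‖ ≤ ‖Matrix.toEuclideanLin bᵀ v‖ := by
  intro v
  rcases eq_or_ne v 0 with rfl | hv
  · simp
  have hherm : sp.IsHermitian := by
    rw [Matrix.IsHermitian, Matrix.conjTranspose_eq_transpose_of_trivial]; exact hsp
  have hPD : sp.PosDef := by
    refine Matrix.posDef_iff_dotProduct_mulVec.mpr ⟨hherm, fun x hx => ?_⟩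
    have hx' : (WithLp.equiv 2 (Fin m → ℝ)).symm x ≠ 0 := by simpa using hx
    have := hposdef _ hx'
    rw [show (star x ⬝ᵥ sp *ᵥ x) = (sp *ᵥ x) ⬝ᵥ x by rw [dotProduct_comm]; rfl]
    simpa [Matrix.toEuclideanLin_apply, PiLp.inner_apply, dotProduct, mul_comm] using this
  have hinv : sp * sp⁻¹ = 1 := Matrix.mul_nonsing_inv _ hPD.det_pos.ne'.isUnit
  have hBsymm : ∀ x y, ⟪Matrix.toEuclideanLin sp x, y⟫ = ⟪Matrix.toEuclideanLin sp y, x⟫ := by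
    intro x y
    rw [tel_adj, hsp.eq, real_inner_comm]
  have hBnn : ∀ x, 0 ≤ ⟪Matrix.toEuclideanLin sp x, x⟫ := by
    intro x
    rcases eq_or_ne x 0 with rfl | hx
    · simp
    · exact (hposdef x hx).le
  set u : EuclideanSpace ℝ (Fin m) := Matrix.toEuclideanLin sp⁻¹ v with hu
  have hspu : Matrix.toEuclideanLin sp u = v := by
    rw [hu, ← tel_mul, hinv, tel_one]
  have hCS : ⟪Matrix.toEuclideanLin sp u, v⟫ ^ 2 ≤
      ⟪Matrix.toEuclideanLin sp u, u⟫ * ⟪Matrix.toEuclideanLin sp v, v⟫ := by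
    have hquad : ∀ t : ℝ, 0 ≤ ⟪Matrix.toEuclideanLin sp u, u⟫ * (t * t) +
        (-2 * ⟪Matrix.toEuclideanLin sp u, v⟫) * t + ⟪Matrix.toEuclideanLin sp v, v⟫ := by
      intro t
      have h0 := hBnn (v - t • u)
      have expand : ⟪Matrix.toEuclideanLin sp (v - t • u), v - t • u⟫ =
          ⟪Matrix.toEuclideanLin sp u, u⟫ * (t * t) +
          (-2 * ⟪Matrix.toEuclideanLin sp u, v⟫) * t + ⟪Matrix.toEuclideanLin sp v, v⟫ := by
        simp only [map_sub, LinearMap.map_smul, inner_sub_left, inner_sub_right,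
          real_inner_smul_left, real_inner_smul_right]
        rw [hBsymm v u]
        ring
      linarith [expand ▸ h0]
    have hd := discrim_le_zero hquad
    rw [discrim] at hd
    nlinarith [hd]
  have hnv : (0:ℝ) < ‖v‖ := norm_pos_iff.mpr hv
  have hIuv : ⟪Matrix.toEuclideanLin sp u, v⟫ = ‖v‖ ^ 2 := by
    rw [hspu, real_inner_self_eq_norm_sq]
  have hBvv : ⟪Matrix.toEuclideanLin sp v, v⟫ ≤ (δ ^ 2 / β) * ‖v‖ ^ 2 := by
    have h3 := h2 v
    rw [map_sub, LinearMap.sub_apply, inner_sub_left, sub_nonneg, tel_smul_one, tel_one] at h3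
    calc ⟪Matrix.toEuclideanLin sp v, v⟫ ≤ (δ ^ 2 / β) * ⟪v, v⟫ := h3
      _ = (δ ^ 2 / β) * ‖v‖ ^ 2 := by rw [real_inner_self_eq_norm_sq]
  have hkey : ‖v‖ ^ 2 ≤ ⟪Matrix.toEuclideanLin sp u, u⟫ * (δ ^ 2 / β) := by
    have h0 : ‖v‖ ^ 2 * ‖v‖ ^ 2 ≤
        (⟪Matrix.toEuclideanLin sp u, u⟫ * (δ ^ 2 / β)) * ‖v‖ ^ 2 := by
      calc ‖v‖ ^ 2 * ‖v‖ ^ 2 = ⟪Matrix.toEuclideanLin sp u, v⟫ ^ 2 := by rw [hIuv]; ring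
        _ ≤ ⟪Matrix.toEuclideanLin sp u, u⟫ * ⟪Matrix.toEuclideanLin sp v, v⟫ := hCS
        _ ≤ ⟪Matrix.toEuclideanLin sp u, u⟫ * ((δ ^ 2 / β) * ‖v‖ ^ 2) :=
            mul_le_mul_of_nonneg_left hBvv (hBnn u)
        _ = (⟪Matrix.toEuclideanLin sp u, u⟫ * (δ ^ 2 / β)) * ‖v‖ ^ 2 := by ring
    exact le_of_mul_le_mul_right h0 (by positivity)
  set w : EuclideanSpace ℝ (Fin m) := Matrix.toEuclideanLin bᵀ v with hw
  have hsmw : ⟪Matrix.toEuclideanLin sm w, w⟫ = -⟪Matrix.toEuclideanLin sp u, u⟫ := by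
    have h3 : Matrix.toEuclideanLin (b * sm * bᵀ) v
        = Matrix.toEuclideanLin b (Matrix.toEuclideanLin sm w) := by
      rw [tel_mul, tel_mul]
    have h4 : ⟪Matrix.toEuclideanLin (b * sm * bᵀ) v, v⟫ = ⟪Matrix.toEuclideanLin sm w, w⟫ := by
      rw [h3, tel_adj]
    have h5 : ⟪Matrix.toEuclideanLin (-sp⁻¹) v, v⟫ = -⟪u, v⟫ := by
      rw [map_neg, LinearMap.neg_apply, inner_neg_left]
    have h6 : ⟪u, v⟫ = ⟪Matrix.toEuclideanLin sp u, u⟫ := by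
      rw [← hspu]; exact real_inner_comm _ _
    rw [← h4, hb, h5, h6]
  have hsm1 : -β * ‖w‖ ^ 2 ≤ ⟪Matrix.toEuclideanLin sm w, w⟫ := by
    have h3 := h1 w
    rw [map_add, LinearMap.add_apply, inner_add_left, tel_smul_one, tel_one,
      real_inner_self_eq_norm_sq] at h3
    linarith
  have hBuu_le : ⟪Matrix.toEuclideanLin sp u, u⟫ ≤ β * ‖w‖ ^ 2 := by linarith [hsm1, hsmw.ge]
  have hfinal : ‖v‖ ^ 2 ≤ δ ^ 2 * ‖w‖ ^ 2 := by
    have h8 : ⟪Matrix.toEuclideanLin sp u, u⟫ * (δ ^ 2 / β) ≤ (β * ‖w‖ ^ 2) * (δ ^ 2 / β) :=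
      mul_le_mul_of_nonneg_right hBuu_le (by positivity)
    have h9 : (β * ‖w‖ ^ 2) * (δ ^ 2 / β) = δ ^ 2 * ‖w‖ ^ 2 := by field_simp
    linarith
  have hsq : (1 / δ * ‖v‖) ^ 2 ≤ ‖w‖ ^ 2 := by
    rw [mul_pow, div_pow, one_pow, div_mul_eq_mul_div, one_mul, div_le_iff₀ (by positivity)]
    linarith [hfinal]
  calc 1 / δ * ‖v‖ = √((1 / δ * ‖v‖) ^ 2) := by rw [Real.sqrt_sq (by positivity)]
    _ ≤ √(‖w‖ ^ 2) := Real.sqrt_le_sqrt hsq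
    _ = ‖w‖ := Real.sqrt_sq (norm_nonneg w)
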